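/- Let u : [0,π] → S² ⊂ ℝ³ be absolutely continuous with |u| ≡ 1 and finite energy E₂[u] = ∫₀^π e₂[u] with e₂[u] = |u'|² sin φ + (4u1² + u3²)/sin φ. Then for all 0 ≤ φ1 < φ2 ≤ π: |u2(φ2) - u2(φ1)| ≤ ∫_{φ1}^{φ2} e₂[u]. -/

import Mathlib

open Real Set MeasureTheory

/-- For u : [0,π] → S² absolutely continuous with finite energy
    E₂[u] = ∫₀^π e₂[u], one has |u2(φ2) - u2(φ1)| ≤ ∫_{φ1}^{φ2} e₂[u]
    for all 0 ≤ φ1 < φ2 ≤ π. -/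
theorem u2_oscillation_bound (u1 u2 u3 : ℝ → ℝ)
    (hc1 : ContinuousOn u1 (Icc 0 π)) (hc2 : ContinuousOn u2 (Icc 0 π))
    (hc3 : ContinuousOn u3 (Icc 0 π))
    (hd1 : ∀ φ ∈ Ioo (0 : ℝ) π, DifferentiableAt ℝ u1 φ)
    (hd2 : ∀ φ ∈ Ioo (0 : ℝ) π, DifferentiableAt ℝ u2 φ)
    (hd3 : ∀ φ ∈ Ioo (0 : ℝ) π, DifferentiableAt ℝ u3 φ)
    (hunit : ∀ φ ∈ Icc (0 : ℝ) π, u1 φ ^ 2 + u2 φ ^ 2 + u3 φ ^ 2 = 1)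
    (e2 : ℝ → ℝ)
    (he2 : e2 = fun φ =>
      ((deriv u1 φ) ^ 2 + (deriv u2 φ) ^ 2 + (deriv u3 φ) ^ 2) * Real.sin φ
        + (4 * u1 φ ^ 2 + u3 φ ^ 2) / Real.sin φ)
    (hint : IntervalIntegrable e2 volume 0 π) :
    ∀ φ1 φ2 : ℝ, 0 ≤ φ1 → φ1 < φ2 → φ2 ≤ π →
      |u2 φ2 - u2 φ1| ≤ ∫ t in φ1..φ2, e2 t := by
  intro φ1 φ2 h1 h12 h2
  have hsub : Ioo φ1 φ2 ⊆ Ioo 0 π := fun x hx =>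
    ⟨lt_of_le_of_lt h1 hx.1, lt_of_lt_of_le hx.2 h2⟩
  have hIcc : Icc φ1 φ2 ⊆ Icc 0 π := Icc_subset_Icc h1 h2
  -- pointwise bound |u2'| ≤ e2 on (0, π)
  have hbound : ∀ φ ∈ Ioo (0:ℝ) π, |deriv u2 φ| ≤ e2 φ := by
    intro φ hφ
    have hs : 0 < Real.sin φ := Real.sin_pos_of_pos_of_lt_pi hφ.1 hφ.2
    have H1 := (hd1 φ hφ).hasDerivAt
    have H2 := (hd2 φ hφ).hasDerivAt
    have H3 := (hd3 φ hφ).hasDerivAt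
    have Hf : HasDerivAt (fun x => u1 x ^ 2 + u2 x ^ 2 + u3 x ^ 2)
        (2 * u1 φ * deriv u1 φ + 2 * u2 φ * deriv u2 φ + 2 * u3 φ * deriv u3 φ) φ := by
      have := ((H1.pow 2).add (H2.pow 2)).add (H3.pow 2)
      rw [show (fun x => u1 x ^ 2 + u2 x ^ 2 + u3 x ^ 2) = u1 ^ 2 + u2 ^ 2 + u3 ^ 2 from rfl]
      exact this.congr_deriv (by norm_num)
    have hev : (fun x => u1 x ^ 2 + u2 x ^ 2 + u3 x ^ 2) =ᶠ[nhds φ] fun _ => (1:ℝ) := by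
      filter_upwards [Ioo_mem_nhds hφ.1 hφ.2] with x hx
      exact hunit x (Ioo_subset_Icc_self hx)
    have hz : deriv (fun x => u1 x ^ 2 + u2 x ^ 2 + u3 x ^ 2) φ = 0 := by
      rw [hev.deriv_eq]; simp
    have horth : u1 φ * deriv u1 φ + u2 φ * deriv u2 φ + u3 φ * deriv u3 φ = 0 := by
      have hh := Hf.deriv
      rw [hz] at hh
      linarith
    set a := deriv u1 φ with ha
    set b := deriv u2 φ with hb
    set c := deriv u3 φ with hcc
    set x := u1 φ with hx
    set y := u2 φ with hy
    set z := u3 φ with hzz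
    set s := Real.sin φ with hss
    have hu := hunit φ (Ioo_subset_Icc_self hφ)
    have h1' : y * b = -(x * a + z * c) := by linarith
    have h2' : (y * b) ^ 2 ≤ (x ^ 2 + z ^ 2) * (a ^ 2 + c ^ 2) := by
      rw [h1']; nlinarith [sq_nonneg (x * c - z * a)]
    have hb2 : b ^ 2 ≤ (x ^ 2 + z ^ 2) * (a ^ 2 + b ^ 2 + c ^ 2) := by
      nlinarith [h2', hu, sq_nonneg b]
    have hD : (0:ℝ) ≤ a ^ 2 + b ^ 2 + c ^ 2 := by positivity
    have hP : (0:ℝ) ≤ x ^ 2 + z ^ 2 := by positivity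
    have hkey : |b| * s ≤ (a ^ 2 + b ^ 2 + c ^ 2) * s ^ 2 + (x ^ 2 + z ^ 2) := by
      have h4 : (|b| * s) ^ 2 ≤ ((a ^ 2 + b ^ 2 + c ^ 2) * s ^ 2 + (x ^ 2 + z ^ 2)) ^ 2 := by
        have hbs : (|b| * s) ^ 2 = b ^ 2 * s ^ 2 := by rw [mul_pow, sq_abs]
        nlinarith [sq_nonneg ((a ^ 2 + b ^ 2 + c ^ 2) * s ^ 2 - (x ^ 2 + z ^ 2)),
          mul_le_mul_of_nonneg_right hb2 (sq_nonneg s), sq_nonneg s,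
          mul_nonneg hD (sq_nonneg s)]
      have h5 : 0 ≤ |b| * s := mul_nonneg (abs_nonneg b) hs.le
      have h6 : (0:ℝ) ≤ (a ^ 2 + b ^ 2 + c ^ 2) * s ^ 2 + (x ^ 2 + z ^ 2) := by positivity
      exact (pow_le_pow_iff_left₀ h5 h6 two_ne_zero).mp h4
    have hrw : e2 φ = ((a ^ 2 + b ^ 2 + c ^ 2) * s ^ 2 + (4 * x ^ 2 + z ^ 2)) / s := by
      rw [he2]; dsimp only; rw [← hss, ← ha, ← hb, ← hcc, ← hx, ← hzz]; field_simp
    rw [hrw, le_div_iff₀ hs]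
    calc |b| * s ≤ (a ^ 2 + b ^ 2 + c ^ 2) * s ^ 2 + (x ^ 2 + z ^ 2) := hkey
      _ ≤ (a ^ 2 + b ^ 2 + c ^ 2) * s ^ 2 + (4 * x ^ 2 + z ^ 2) := by linarith [sq_nonneg x]
  -- integrability of e2 and of deriv u2 on [φ1, φ2]
  have hintsub : IntervalIntegrable e2 volume φ1 φ2 := by
    apply hint.mono_set
    rw [uIcc_of_le h12.le, uIcc_of_le (le_trans h1 (le_trans h12.le h2))]
    exact hIcc
  have hae : ∀ᵐ t ∂(volume.restrict (Set.uIoc φ1 φ2)), ‖deriv u2 t‖ ≤ e2 t := by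
    have hne : ∀ᵐ (t:ℝ) ∂(volume.restrict (Set.uIoc φ1 φ2)), t ≠ φ2 := by
      apply ae_restrict_of_ae
      rw [ae_iff]
      have : {t : ℝ | ¬t ≠ φ2} = {φ2} := by ext t; simp
      rw [this]
      exact Real.volume_singleton
    have hmem : ∀ᵐ (t:ℝ) ∂(volume.restrict (Set.uIoc φ1 φ2)), t ∈ Set.uIoc φ1 φ2 :=
      ae_restrict_mem measurableSet_uIoc
    filter_upwards [hne, hmem] with t ht htm
    rw [Set.uIoc_of_le h12.le] at htm
    have : t ∈ Ioo φ1 φ2 := ⟨htm.1, lt_of_le_of_ne htm.2 ht⟩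
    rw [Real.norm_eq_abs]
    exact hbound t (hsub this)
  have hint2 : IntervalIntegrable (deriv u2) volume φ1 φ2 :=
    hintsub.mono_fun' (measurable_deriv u2).aestronglyMeasurable hae
  have hftc : ∫ t in φ1..φ2, deriv u2 t = u2 φ2 - u2 φ1 :=
    intervalIntegral.integral_eq_sub_of_hasDeriv_right_of_le h12.le
      (hc2.mono hIcc)
      (fun x hx => ((hd2 x (hsub hx)).hasDerivAt.hasDerivWithinAt))
      hint2
  have hnn : 0 ≤ ∫ t in φ1..φ2, e2 t := by
    apply intervalIntegral.integral_nonneg_of_ae_restrict h12.le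
    have hne1 : ∀ᵐ (t:ℝ) ∂(volume.restrict (Icc φ1 φ2)), t ∉ ({φ1, φ2} : Set ℝ) := by
      apply ae_restrict_of_ae
      rw [ae_iff]
      simp only [not_not]
      have hfin : ({φ1, φ2} : Set ℝ).Finite :=
        (Set.finite_singleton φ2).insert φ1
      convert hfin.measure_zero volume using 2
      rfl
    filter_upwards [hne1, ae_restrict_mem measurableSet_Icc] with t ht htm
    have ht1 : t ≠ φ1 := fun h => ht (by simp [h])
    have ht2 : t ≠ φ2 := fun h => ht (by simp [h])
    exact le_trans (abs_nonneg _)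
      (hbound t (hsub ⟨lt_of_le_of_ne htm.1 (Ne.symm ht1), lt_of_le_of_ne htm.2 ht2⟩))
  rw [← hftc]
  have h := intervalIntegral.norm_integral_le_abs_of_norm_le hae hintsub
  rw [abs_of_nonneg hnn] at h
  simpa [Real.norm_eq_abs] using h
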